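/- Let μ be a Borel measure on ℝ finite on compact sets, f : ℝ → ℝ a μ-integrable function on [a, x], and a < x. Then ∫_a^x (∫_{[a, z]} f(y) dμ(y)) dz = ∫_{[a, x]} (x − y) f(y) dμ(y) (equivalently, with (x − y) replaced by the length of {z ∈ [a,x] : z ≥ y}). -/

import Mathlib

open MeasureTheory Set intervalIntegral

/-- Fubini-type identity turning an iterated integral into an
integral against the Volterra kernel (x - y). -/
theorem stmt9 (μ : Measure ℝ) [IsLocallyFiniteMeasure μ] (a x : ℝ) (hax : a < x)
    (f : ℝ → ℝ) (hf : IntegrableOn f (Icc a x) μ) :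
    ∫ z in a..x, (∫ y in Icc a z, f y ∂μ) =
      ∫ y in Icc a x, (x - y) * f y ∂μ := by
  have hx : a ≤ x := hax.le
  set ν := volume.restrict (Ioc a x) with hν
  set μ' := μ.restrict (Icc a x) with hμ'
  set S : Set (ℝ × ℝ) := {p : ℝ × ℝ | p.2 ≤ p.1} with hSdef
  have hS : MeasurableSet S := measurableSet_le measurable_snd measurable_fst
  set F : ℝ × ℝ → ℝ := S.indicator (fun p => f p.2) with hFdef
  -- integrability of (fun p => f p.2) on the product
  have hνfin : ν univ ≠ ⊤ := by
    simp [hν, Measure.restrict_apply_univ]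
  have hsnd : Integrable (fun p : ℝ × ℝ => f p.2) (ν.prod μ') := by
    have hmap : (ν.prod μ').map Prod.snd = ν univ • μ' := Measure.map_snd_prod
    have h1 : Integrable f ((ν.prod μ').map Prod.snd) := by
      rw [hmap]; exact hf.smul_measure hνfin
    rwa [integrable_map_measure h1.aestronglyMeasurable
      measurable_snd.aemeasurable] at h1
  have hFi : Integrable F (ν.prod μ') := hsnd.indicator hS
  -- left side as an integral against ν of the F-integral
  have hL : ∫ z in a..x, (∫ y in Icc a z, f y ∂μ)
      = ∫ z, (∫ y, F (z, y) ∂μ') ∂ν := by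
    rw [intervalIntegral.integral_of_le hx]
    refine setIntegral_congr_fun measurableSet_Ioc (fun z hz => ?_)
    have : (fun y => F (z, y)) = (Iic z).indicator f := by
      funext y
      simp [hFdef, hSdef, Set.indicator_apply]
    rw [this, hμ', setIntegral_indicator measurableSet_Iic]
    congr 1
    congr 1; ext t; simp only [mem_Icc, mem_inter_iff, mem_Iic]; constructor
    · exact fun h => ⟨⟨h.1, h.2.trans hz.2⟩, h.2⟩
    · exact fun h => ⟨h.1.1, h.2⟩
  -- right side
  have hR : ∫ y, (∫ z, F (z, y) ∂ν) ∂μ' = ∫ y in Icc a x, (x - y) * f y ∂μ := by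
    rw [hμ']
    refine setIntegral_congr_fun measurableSet_Icc (fun y hy => ?_)
    have : (fun z => F (z, y)) = (Ici y).indicator (fun _ => f y) := by
      funext z
      simp [hFdef, hSdef, Set.indicator_apply]
    rw [this, hν, setIntegral_indicator measurableSet_Ici]
    have hmeas : volume (Ioc a x ∩ Ici y) = ENNReal.ofReal (x - y) := by
      have h1 : volume (Ioc a x ∩ Ici y) ≤ volume (Icc y x) := by
        refine measure_mono (fun z hz => ⟨hz.2, hz.1.2⟩)
      have h2 : volume (Ioc y x) ≤ volume (Ioc a x ∩ Ici y) := by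
        refine measure_mono (fun z hz => ⟨⟨lt_of_le_of_lt hy.1 hz.1, hz.2⟩, hz.1.le⟩)
      rw [Real.volume_Icc] at h1
      rw [Real.volume_Ioc] at h2
      exact le_antisymm h1 h2
    rw [setIntegral_const, measureReal_def, hmeas, ENNReal.toReal_ofReal (by linarith [hy.2])]
    rfl
  rw [hL, ← hR]
  exact integral_integral_swap hFi
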